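/- In the braid group B_q, for 1 ≤ m ≤ q−1, the identity Δ_{q-1}^{m+1} · Δ_{m-1} · Π_{q-1}^m · Π_{q-2}^{m-1} ⋯ Π_{q-m+1}^2 · Π_{q-m} = Δ_{q-1} holds, where Δ_{q-1} = Π_{q-1} Π_{q-2} ⋯ Π_1 is the half-twist. -/

import Mathlib

/-- Defining relations for the braid group `B n` on `n` strands, with Artin
generators `σ_1, …, σ_{n-1}`.  Generators with index `0` or `≥ n` are killed,
so the presented group is exactly `B n`. -/
def braidRels (n : ℕ) : Set (FreeGroup ℕ) :=
  {r | (∃ i, 1 ≤ i ∧ i + 2 ≤ n ∧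
        r = FreeGroup.of i * FreeGroup.of (i + 1) * FreeGroup.of i *
            (FreeGroup.of (i + 1) * FreeGroup.of i * FreeGroup.of (i + 1))⁻¹) ∨
      (∃ i j, 1 ≤ i ∧ i + 2 ≤ j ∧ j + 1 ≤ n ∧
        r = FreeGroup.of i * FreeGroup.of j * (FreeGroup.of j * FreeGroup.of i)⁻¹) ∨
      (∃ i, (i = 0 ∨ n ≤ i) ∧ r = FreeGroup.of i)}

/-- The braid group on `n` strands. -/
def BraidGroup (n : ℕ) : Type := PresentedGroup (braidRels n)

instance (n : ℕ) : Group (BraidGroup n) := by unfold BraidGroup; infer_instance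

/-- The Artin generator `σ_i` of `B n`. -/
def sigma (n i : ℕ) : BraidGroup n := PresentedGroup.of i

/-- `Π_s^l = σ_l σ_{l+1} ⋯ σ_s`  (the identity when `s < l`). -/
def Pi' (n l s : ℕ) : BraidGroup n := ((List.range' l (s + 1 - l)).map (sigma n)).prod

/-- `Δ_s^l = Π_s^l Π_{s-1}^l ⋯ Π_l^l`  (the identity when `s < l`). -/
def Delta (n l s : ℕ) : BraidGroup n :=
  ((List.range (s + 1 - l)).map (fun k => Pi' n l (s - k))).prod

lemma rel_eq_one {n : ℕ} {r : FreeGroup ℕ} (hr : r ∈ braidRels n) :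
    (PresentedGroup.mk (braidRels n) r : BraidGroup n) = 1 :=
  (QuotientGroup.eq_one_iff _).2 (Subgroup.subset_normalClosure hr)

lemma braid_rel {q : ℕ} (i : ℕ) (h1 : 1 ≤ i) (h2 : i + 2 ≤ q) :
    sigma q i * sigma q (i+1) * sigma q i = sigma q (i+1) * sigma q i * sigma q (i+1) := by
  have := rel_eq_one (n := q) (r := FreeGroup.of i * FreeGroup.of (i + 1) * FreeGroup.of i *
            (FreeGroup.of (i + 1) * FreeGroup.of i * FreeGroup.of (i + 1))⁻¹)
    (Or.inl ⟨i, h1, h2, rfl⟩)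
  simp only [map_mul, map_inv] at this
  rw [mul_inv_eq_one] at this
  exact this

lemma comm_rel {q : ℕ} (i j : ℕ) (h1 : 1 ≤ i) (h2 : i + 2 ≤ j) (h3 : j + 1 ≤ q) :
    sigma q i * sigma q j = sigma q j * sigma q i := by
  have := rel_eq_one (n := q) (r := FreeGroup.of i * FreeGroup.of j *
      (FreeGroup.of j * FreeGroup.of i)⁻¹) (Or.inr (Or.inl ⟨i, j, h1, h2, h3, rfl⟩))
  simp only [map_mul, map_inv] at this
  rw [mul_inv_eq_one] at this
  exact this

lemma Pi'_nil {n l s : ℕ} (h : s < l) : Pi' n l s = 1 := by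
  unfold Pi'
  have : s + 1 - l = 0 := by omega
  simp [this]

lemma Pi'_concat {n l t s : ℕ} (h1 : l ≤ t + 1) (h2 : t ≤ s) :
    Pi' n l t * Pi' n (t+1) s = Pi' n l s := by
  unfold Pi'
  rw [← List.prod_append, ← List.map_append]
  congr 1
  have h3 : List.range' l (t + 1 - l) ++ List.range' (l + (t + 1 - l)) (s - t) =
      List.range' l ((t + 1 - l) + (s - t)) := List.range'_append_1
  rw [show l + (t + 1 - l) = t + 1 by omega, show (t + 1 - l) + (s - t) = s + 1 - l by omega] at h3
  rw [show s + 1 - (t + 1) = s - t by omega, h3]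

lemma Pi'_cons {n l s : ℕ} (h : l ≤ s) : Pi' n l s = sigma n l * Pi' n (l+1) s := by
  have := Pi'_concat (n := n) (l := l) (t := l) (s := s) (by omega) h
  rw [← this]
  congr 1
  unfold Pi'
  simp [show l + 1 - l = 1 by omega]

lemma Pi'_snoc {n l s : ℕ} (h : l ≤ s + 1) : Pi' n l (s+1) = Pi' n l s * sigma n (s+1) := by
  rcases Nat.lt_or_ge s l with h' | h'
  · have : l = s + 1 := by omega
    subst this
    rw [Pi'_nil (n := n) (l := s+1) (s := s) (by omega), one_mul]
    unfold Pi'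
    simp [show s + 1 + 1 - (s+1) = 1 by omega]
  · rw [← Pi'_concat (n := n) (l := l) (t := s) (s := s+1) (by omega) (by omega)]
    congr 1
    unfold Pi'
    simp [show s + 1 + 1 - (s + 1) = 1 by omega]

lemma sigma_comm_prod {q : ℕ} (i : ℕ) (L : List ℕ)
    (h : ∀ j ∈ L, sigma q i * sigma q j = sigma q j * sigma q i) :
    sigma q i * (L.map (sigma q)).prod = (L.map (sigma q)).prod * sigma q i := by
  induction L with
  | nil => simp
  | cons a L ih =>
    simp only [List.map_cons, List.prod_cons, ← mul_assoc]
    rw [h a (by simp), mul_assoc, ih (fun j hj => h j (by simp [hj])), ← mul_assoc]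

lemma sigma_comm_Pi'_low {q : ℕ} {i l s : ℕ} (h1 : 1 ≤ i) (h2 : i + 2 ≤ l) (h3 : s + 1 ≤ q) :
    sigma q i * Pi' q l s = Pi' q l s * sigma q i := by
  apply sigma_comm_prod
  intro j hj
  rw [List.mem_range'] at hj
  obtain ⟨k, hk, rfl⟩ := hj
  exact comm_rel i (l+1*k) h1 (by omega) (by omega)

lemma sigma_comm_Pi'_high {q : ℕ} {i l s : ℕ} (h1 : 1 ≤ l) (h2 : s + 2 ≤ i) (h3 : i + 1 ≤ q) :
    sigma q i * Pi' q l s = Pi' q l s * sigma q i := by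
  apply sigma_comm_prod
  intro j hj
  rw [List.mem_range'] at hj
  obtain ⟨k, hk, rfl⟩ := hj
  exact (comm_rel (l+1*k) i (by omega) (by omega) h3).symm

lemma shift_sigma {q l s i : ℕ} (h1 : 1 ≤ l) (h2 : l ≤ i) (h3 : i + 1 ≤ s) (h4 : s + 1 ≤ q) :
    Pi' q l s * sigma q i = sigma q (i+1) * Pi' q l s := by
  obtain ⟨j, rfl⟩ : ∃ j, i = j + 1 := ⟨i - 1, by omega⟩
  -- Pi' q l s = Pi' q l (j+2) * Pi' q (j+3) s,  Pi' q l (j+2) = Pi' q l j * σ_{j+1} * σ_{j+2}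
  have hc : Pi' q l (j+1+1) * Pi' q (j+1+2) s = Pi' q l s := Pi'_concat (by omega) (by omega)
  have hs1 : Pi' q l (j+1+1) = Pi' q l (j+1) * sigma q (j+1+1) := Pi'_snoc (by omega)
  have hs2 : Pi' q l (j+1) = Pi' q l j * sigma q (j+1) := Pi'_snoc (by omega)
  have hcomm1 : sigma q (j+1) * Pi' q (j+3) s = Pi' q (j+3) s * sigma q (j+1) :=
    sigma_comm_Pi'_low (by omega) (by omega) (by omega)
  have hcomm2 : sigma q (j+2) * Pi' q l j = Pi' q l j * sigma q (j+2) := by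
    rcases Nat.lt_or_ge j l with h | h
    · rw [Pi'_nil (n := q) (l := l) (s := j) h, mul_one, one_mul]
    · exact sigma_comm_Pi'_high (by omega) (by omega) (by omega)
  calc Pi' q l s * sigma q (j+1)
      = Pi' q l j * sigma q (j+1) * sigma q (j+2) * (Pi' q (j+3) s * sigma q (j+1)) := by
        rw [← hc, hs1, hs2]; group
    _ = Pi' q l j * (sigma q (j+1) * sigma q (j+2) * sigma q (j+1)) * Pi' q (j+3) s := by
        rw [← hcomm1]; group
    _ = Pi' q l j * (sigma q (j+2) * sigma q (j+1) * sigma q (j+2)) * Pi' q (j+3) s := by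
        rw [← braid_rel (j+1) (by omega) (by omega)]
    _ = sigma q (j+2) * (Pi' q l j * sigma q (j+1) * sigma q (j+2) * Pi' q (j+3) s) := by
        rw [show Pi' q l j * (sigma q (j+2) * sigma q (j+1) * sigma q (j+2)) =
            (Pi' q l j * sigma q (j+2)) * (sigma q (j+1) * sigma q (j+2)) by group, ← hcomm2]
        group
    _ = sigma q (j+1+1) * Pi' q l s := by
        rw [show Pi' q l j * sigma q (j+1) * sigma q (j+2) * Pi' q (j+3) s =
            Pi' q l (j+1+1) * Pi' q (j+1+2) s by rw [hs1, hs2], hc]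

lemma Delta_nil {n l s : ℕ} (h : s < l) : Delta n l s = 1 := by
  unfold Delta
  have : s + 1 - l = 0 := by omega
  simp [this]

lemma Delta_rec {n l s : ℕ} (h : l ≤ s + 1) :
    Delta n l (s+1) = Pi' n l (s+1) * Delta n l s := by
  unfold Delta
  rw [show s + 1 + 1 - l = (s + 1 - l) + 1 by omega, List.range_succ_eq_map]
  simp only [List.map_cons, List.prod_cons, Nat.sub_zero, List.map_map]
  congr 1
  congr 1
  apply List.map_congr_left
  intro k _
  simp only [Function.comp_apply]
  congr 1
  omega

lemma shift_Pi {q l l' s t : ℕ} (h1 : 1 ≤ l) (h2 : l ≤ l') (h4 : s + 1 ≤ q) :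
    t + 1 ≤ s → Pi' q l s * Pi' q l' t = Pi' q (l'+1) (t+1) * Pi' q l s := by
  induction t with
  | zero =>
    intro h3
    rw [Pi'_nil (n := q) (l := l') (s := 0) (by omega),
        Pi'_nil (n := q) (l := l'+1) (s := 1) (by omega), mul_one, one_mul]
  | succ u ih =>
    intro h3
    rcases Nat.lt_or_ge (u+1) l' with h | h
    · rw [Pi'_nil (n := q) (l := l') (s := u+1) h,
          Pi'_nil (n := q) (l := l'+1) (s := u+2) (by omega), mul_one, one_mul]
    · rw [Pi'_snoc (n := q) (l := l') (s := u) (by omega), ← mul_assoc,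
          ih (by omega), mul_assoc, shift_sigma h1 (by omega) (by omega) h4, ← mul_assoc,
          ← Pi'_snoc (n := q) (l := l'+1) (s := u+1) (by omega)]

lemma shift_Delta {q l l' s t : ℕ} (h1 : 1 ≤ l) (h2 : l ≤ l') (h4 : s + 1 ≤ q) :
    t + 1 ≤ s → Pi' q l s * Delta q l' t = Delta q (l'+1) (t+1) * Pi' q l s := by
  induction t with
  | zero =>
    intro h3
    rw [Delta_nil (n := q) (l := l') (s := 0) (by omega),
        Delta_nil (n := q) (l := l'+1) (s := 1) (by omega), mul_one, one_mul]
  | succ u ih =>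
    intro h3
    rcases Nat.lt_or_ge (u+1) l' with h | h
    · rw [Delta_nil (n := q) (l := l') (s := u+1) h,
          Delta_nil (n := q) (l := l'+1) (s := u+2) (by omega), mul_one, one_mul]
    · rw [Delta_rec (n := q) (l := l') (s := u) (by omega), ← mul_assoc,
          shift_Pi h1 h2 h4 (by omega), mul_assoc, ih (by omega), ← mul_assoc,
          ← Delta_rec (n := q) (l := l'+1) (s := u+1) (by omega)]

lemma claimA {q l s : ℕ} (h1 : 1 ≤ l) (h4 : s + 1 ≤ q) :
    Delta q l s = Delta q (l+1) s * Pi' q l s := by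
  rcases Nat.lt_or_ge s l with h | h
  · rw [Delta_nil (n := q) (l := l) (s := s) h, Delta_nil (n := q) (l := l+1) (s := s) (by omega),
        Pi'_nil (n := q) (l := l) (s := s) h, mul_one]
  · obtain ⟨u, rfl⟩ : ∃ u, s = u + 1 := ⟨s - 1, by omega⟩
    rw [Delta_rec (n := q) (l := l) (s := u) (by omega),
        shift_Delta h1 (le_refl l) h4 (by omega)]

def Chain (n l m s : ℕ) : BraidGroup n :=
  ((List.range m).map (fun j => Pi' n (l + m - 1 - j) (s - j))).prod

lemma prod_map_congr {n : ℕ} {f g : ℕ → BraidGroup n} {L : List ℕ}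
    (h : ∀ j ∈ L, f j = g j) : (L.map f).prod = (L.map g).prod := by
  rw [List.map_congr_left h]

lemma Chain_zero {n l s : ℕ} : Chain n l 0 s = 1 := by
  unfold Chain; simp

lemma Chain_head {n l m s : ℕ} :
    Chain n l (m+1) s = Pi' n (l+m) s * Chain n l m (s-1) := by
  unfold Chain
  rw [List.range_succ_eq_map, List.map_cons, List.prod_cons, List.map_map]
  congr 1
  exact prod_map_congr (fun j _ => by
      show Pi' n (l+(m+1)-1-(j+1)) (s-(j+1)) = Pi' n (l+m-1-j) ((s-1)-j)
      rw [show l+(m+1)-1-(j+1) = l+m-1-j from by omega,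
          show s-(j+1) = s-1-j from by omega])


lemma Chain_one {n l s : ℕ} : Chain n l 1 s = Pi' n l s := by
  rw [show (1:ℕ) = 0 + 1 from rfl, Chain_head, Chain_zero, mul_one, Nat.add_zero]

lemma Chain_last {n l m s : ℕ} :
    Chain n l (m+1) s = Chain n (l+1) m s * Pi' n l (s-m) := by
  unfold Chain
  rw [List.range_succ, List.map_append, List.prod_append, List.map_cons, List.map_nil,
      List.prod_cons, List.prod_nil, mul_one]
  congr 1
  · exact prod_map_congr (fun j _ => by
      show Pi' n (l+(m+1)-1-j) (s-j) = Pi' n ((l+1)+m-1-j) (s-j)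
      rw [show l+(m+1)-1-j = (l+1)+m-1-j from by omega])
  · show Pi' n (l+(m+1)-1-m) (s-m) = Pi' n l (s-m)
    rw [show l+(m+1)-1-m = l from by omega]

lemma shift_Chain {q l l' s m : ℕ} (h1 : 1 ≤ l) (h2 : l ≤ l') (h4 : s + 1 ≤ q) :
    ∀ t, m ≤ t + 1 → t + 1 ≤ s →
    Pi' q l s * Chain q l' m t = Chain q (l'+1) m (t+1) * Pi' q l s := by
  induction m with
  | zero => intro t _ _; rw [Chain_zero, Chain_zero, mul_one, one_mul]
  | succ k ih =>
    intro t hm h3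
    rcases t with _ | v
    · have hk : k = 0 := by omega
      subst hk
      rw [Chain_head, Chain_head, Chain_zero, Chain_zero, mul_one, mul_one,
          Pi'_nil (n := q) (l := l'+0) (s := 0) (by omega),
          Pi'_nil (n := q) (l := l'+1+0) (s := 0+1) (by omega), mul_one, one_mul]
    · rw [Chain_head, Chain_head, show v+1-1 = v from by omega,
          show v+1+1-1 = v+1 from by omega, show l'+1+k = l'+k+1 from by omega,
          ← mul_assoc, shift_Pi h1 (by omega) h4 (by omega), mul_assoc,
          ih v (by omega) (by omega), ← mul_assoc]

lemma claimE {q l m s : ℕ} (h1 : 1 ≤ l) (hm : 1 ≤ m) (h2 : l + m ≤ s) (h4 : s + 1 ≤ q) :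
    Pi' q l (l+m-1) * Chain q (l+1) m s * Pi' q l (s-m) =
      Chain q (l+1) m s * Pi' q l s := by
  obtain ⟨k, rfl⟩ : ∃ k, m = k + 1 := ⟨m - 1, by omega⟩
  have hC : Chain q (l+1) (k+1) s = Pi' q (l+k+1) s * Chain q (l+1) k (s-1) := by
    rw [Chain_head, show l+1+k = l+k+1 from by omega]
  calc Pi' q l (l+(k+1)-1) * Chain q (l+1) (k+1) s * Pi' q l (s-(k+1))
      = (Pi' q l (l+k) * Pi' q (l+k+1) s) * Chain q (l+1) k (s-1) * Pi' q l (s-(k+1)) := by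
        rw [hC, show l+(k+1)-1 = l+k from by omega]; group
    _ = Pi' q l s * Chain q (l+1) k (s-1) * Pi' q l (s-(k+1)) := by
        rw [Pi'_concat (by omega) (by omega)]
    _ = Chain q (l+2) k s * Pi' q l s * Pi' q l (s-(k+1)) := by
        rw [shift_Chain h1 (by omega) h4 (s-1) (by omega) (by omega),
            show s - 1 + 1 = s from by omega]
    _ = Chain q (l+2) k s * (Pi' q (l+1) (s-(k+1)+1) * Pi' q l s) := by
        rw [mul_assoc, shift_Pi h1 (le_refl l) h4 (by omega)]
    _ = Chain q (l+1) (k+1) s * Pi' q l s := by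
        rw [Chain_last, show l+1+1 = l+2 from rfl, show s - k = s-(k+1)+1 from by omega]
        group

lemma claimG {q m s : ℕ} (hm : 1 ≤ m) (h4 : s + 1 ≤ q) :
    ∀ l, 1 ≤ l → l + m - 1 ≤ s →
    Delta q (l+m) s * Delta q l (l+m-2) * Chain q l m s = Delta q l s := by
  induction m, hm using Nat.le_induction with
  | base =>
    intro l h1 h2
    rw [Chain_one, Delta_nil (n := q) (l := l) (s := l+1-2) (by omega), mul_one]
    exact (claimA h1 h4).symm
  | succ m hm ih =>
    intro l h1 h2
    have hIH := ih (l+1) (by omega) (by omega)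
    have hA1 : Delta q l (l+(m+1)-2) = Delta q (l+1) (l+m-1) * Pi' q l (l+m-1) := by
      rw [show l+(m+1)-2 = l+m-1 from by omega]
      exact claimA h1 (by omega)
    have hE := claimE (q := q) (l := l) (m := m) (s := s) h1 hm (by omega) h4
    rw [Chain_last, hA1]
    calc Delta q (l+(m+1)) s * (Delta q (l+1) (l+m-1) * Pi' q l (l+m-1)) *
          (Chain q (l+1) m s * Pi' q l (s-m))
        = Delta q (l+(m+1)) s * Delta q (l+1) (l+m-1) *
          (Pi' q l (l+m-1) * Chain q (l+1) m s * Pi' q l (s-m)) := by group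
      _ = Delta q (l+(m+1)) s * Delta q (l+1) (l+m-1) * (Chain q (l+1) m s * Pi' q l s) := by
          rw [hE]
      _ = Delta q (l+1+m) s * Delta q (l+1) (l+1+m-2) * Chain q (l+1) m s * Pi' q l s := by
          rw [show l+1+m-2 = l+m-1 from by omega, show l+1+m = l+(m+1) from by omega]; group
      _ = Delta q (l+1) s * Pi' q l s := by rw [hIH]
      _ = Delta q l s := (claimA h1 h4).symm


theorem stmt13 (q m : ℕ) (hm : 1 ≤ m) (hmq : m ≤ q - 1) :
    Delta q (m + 1) (q - 1) * Delta q 1 (m - 1) * ((List.range m).map (fun j => Pi' q (m - j) (q - 1 - j))).prod = Delta q 1 (q - 1) := by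
  have hq : 2 ≤ q := by omega
  have h := claimG (q := q) (m := m) (s := q - 1) hm (by omega) 1 (by omega) (by omega)
  rw [show (1:ℕ) + m - 2 = m - 1 from by omega, show (1:ℕ) + m = m + 1 from by omega] at h
  have hc : Chain q 1 m (q-1) = ((List.range m).map (fun j => Pi' q (m - j) (q - 1 - j))).prod := by
    unfold Chain
    exact prod_map_congr (fun j _ => by rw [show 1+m-1-j = m-j from by omega])
  rw [hc] at h
  exact h
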